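/- The map T ↦ S(T) (placing T on the λ-part and filling row i of the α-part with i's) is a bijection between semistandard Young tableaux of shape λ and content μ, and Littlewood-Richardson skew tableaux of shape λ*α and content ν, where λ has two parts, αᵢ = Σ_{j>i} μⱼ, and νᵢ = αᵢ + μᵢ (with ν_ℓ = μ_ℓ). -/

import Mathlib

open Finset

/-- The two-row Young diagram with row lengths `l1` (top) and `l2` (bottom).
In intended uses `l2 ≤ l1`. -/
def twoRow (l1 l2 : ℕ) : YoungDiagram :=
  YoungDiagram.ofRowLens [max l1 l2, l2] (by
    simp [List.sortedGE_iff_pairwise, le_max_right])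

/-- The number of cells of `T` with entry `v` (entries are 0-indexed). -/
def content {sh : YoungDiagram} (T : SemistandardYoungTableau sh) (v : ℕ) : ℕ :=
  (sh.cells.filter fun c => T c.1 c.2 = v).card

/-- Kostka number: the number of semistandard Young tableaux of shape `sh`
with content `c` (entries 0-indexed: `c v` copies of entry `v`). -/
noncomputable def kostka (sh : YoungDiagram) (c : ℕ → ℕ) : ℕ :=
  Nat.card {T : SemistandardYoungTableau sh // ∀ v, content T v = c v}

/-- A skew semistandard tableau on the skew shape whose `i`-th row occupies
columns `[lo i, lo i + len i)`: rows weakly increase, columns strictly increase,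
entries vanish off the shape. -/
structure SkewTab (lo len : ℕ → ℕ) where
  entry : ℕ → ℕ → ℕ
  rowWeak : ∀ i j1 j2, lo i ≤ j1 → j1 ≤ j2 → j2 < lo i + len i → entry i j1 ≤ entry i j2
  colStrict : ∀ i j, lo i ≤ j → j < lo i + len i → lo (i + 1) ≤ j →
    j < lo (i + 1) + len (i + 1) → entry i j < entry (i + 1) j
  zeros : ∀ i j, ¬(lo i ≤ j ∧ j < lo i + len i) → entry i j = 0

/-- The reading word: each row read right to left, rows top to bottom. -/
def readWord (lo len : ℕ → ℕ) (rows : ℕ) (T : SkewTab lo len) : List ℕ :=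
  (List.range rows).flatMap fun i =>
    (List.range (len i)).reverse.map fun t => T.entry i (lo i + t)

/-- A word is a lattice word: every prefix has at least as many `v`'s as `(v+1)`'s. -/
def IsLattice (w : List ℕ) : Prop := ∀ n v, (w.take n).count (v + 1) ≤ (w.take n).count v

/-- Number of copies of `v` in row `i` of the skew tableau `T`. -/
def rowContent (lo len : ℕ → ℕ) (T : SkewTab lo len) (i v : ℕ) : ℕ :=
  ((Finset.Ico (lo i) (lo i + len i)).filter fun j => T.entry i j = v).card

/-- Total number of copies of `v` in the skew tableau `T` (with `rows` rows). -/
def skewContent (lo len : ℕ → ℕ) (rows : ℕ) (T : SkewTab lo len) (v : ℕ) : ℕ :=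
  ∑ i ∈ Finset.range rows, rowContent lo len T i v

/-- Left endpoints of the rows of the skew shape `λ*α` where `λ = (l1, l2)` and
`α` has `m` rows: the `m` rows of `α` start at column `l1`, the two rows of `λ` at column 0. -/
def starLo (l1 m : ℕ) (i : ℕ) : ℕ := if i < m then l1 else 0

/-- Row lengths of the skew shape `λ*α`, `λ = (l1, l2)`, `α` with `m` rows. -/
def starLen (l1 l2 : ℕ) (a : ℕ → ℕ) (m : ℕ) (i : ℕ) : ℕ :=
  if i < m then a i else if i = m then l1 else if i = m + 1 then l2 else 0

lemma count_rev_range_map (g : ℕ → ℕ) (v n : ℕ) :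
    (((List.range n).reverse.map g).count v) = ∑ j ∈ Finset.range n, if g j = v then 1 else 0 := by
  induction n with
  | zero => simp
  | succ n ih =>
    have hrev : (List.range (n+1)).reverse = n :: (List.range n).reverse := by
      rw [List.range_succ]; simp
    rw [hrev, List.map_cons, List.count_cons, ih, Finset.sum_range_succ]
    rcases eq_or_ne (g n) v with h | h
    · simp [h]
    · simp [h, Ne.symm h]

-- twoRow lemmas
lemma mem_twoRow {l1 l2 i j : ℕ} :
    (i, j) ∈ twoRow l1 l2 ↔ (i = 0 ∧ j < max l1 l2) ∨ (i = 1 ∧ j < l2) := by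
  rw [twoRow, YoungDiagram.mem_ofRowLens]
  match i with
  | 0 => simp
  | 1 => simp
  | (n+2) => simp

lemma cells_twoRow (l1 l2 : ℕ) :
    (twoRow l1 l2).cells =
      ({0} ×ˢ Finset.range (max l1 l2)) ∪ ({1} ×ˢ Finset.range l2) := by
  ext ⟨i, j⟩
  rw [YoungDiagram.mem_cells, mem_twoRow]
  simp
  omega

lemma content_twoRow (l1 l2 : ℕ) (T : SemistandardYoungTableau (twoRow l1 l2)) (v : ℕ) :
    content T v = (∑ j ∈ Finset.range (max l1 l2), if T 0 j = v then 1 else 0)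
      + ∑ j ∈ Finset.range l2, if T 1 j = v then 1 else 0 := by
  rw [content, Finset.card_filter, cells_twoRow, Finset.sum_union]
  · rw [Finset.sum_product, Finset.sum_product]
    simp
  · rw [Finset.disjoint_left]
    rintro ⟨x, y⟩ hx hy
    simp at hx hy
    omega

-- new material:

lemma SkewTab.ext' {lo len : ℕ → ℕ} {S1 S2 : SkewTab lo len}
    (h : ∀ i j, S1.entry i j = S2.entry i j) : S1 = S2 := by
  cases S1 with
  | mk e1 r1 c1 z1 =>
    cases S2 with
    | mk e2 r2 c2 z2 =>
      obtain rfl : e1 = e2 := funext fun i => funext (h i)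
      rfl

/-- The word of row `i`, read right to left. -/
def rowWord (lo len : ℕ → ℕ) (S : SkewTab lo len) (i : ℕ) : List ℕ :=
  (List.range (len i)).reverse.map fun t => S.entry i (lo i + t)

lemma readWord_eq (lo len : ℕ → ℕ) (rows : ℕ) (S : SkewTab lo len) :
    readWord lo len rows S = (List.range rows).flatMap (rowWord lo len S) := rfl

lemma length_rowWord (lo len : ℕ → ℕ) (S : SkewTab lo len) (i : ℕ) :
    (rowWord lo len S i).length = len i := by simp [rowWord]

lemma count_rowWord (lo len : ℕ → ℕ) (S : SkewTab lo len) (i v : ℕ) :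
    (rowWord lo len S i).count v = rowContent lo len S i v := by
  rw [rowWord, count_rev_range_map, rowContent, Finset.card_filter,
    Finset.sum_Ico_eq_sum_range]
  simp

lemma rowContent_const {lo len : ℕ → ℕ} {S : SkewTab lo len} {i c : ℕ}
    (h : ∀ j, lo i ≤ j → j < lo i + len i → S.entry i j = c) (v : ℕ) :
    rowContent lo len S i v = if v = c then len i else 0 := by
  rw [rowContent]
  rcases eq_or_ne v c with rfl | hv
  · rw [if_pos rfl, Finset.filter_true_of_mem, Nat.card_Ico]
    · omega
    · intro j hj
      rw [Finset.mem_Ico] at hj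
      exact h j hj.1 hj.2
  · rw [if_neg hv, Finset.filter_false_of_mem, Finset.card_empty]
    intro j hj
    rw [Finset.mem_Ico] at hj
    rw [h j hj.1 hj.2]
    exact Ne.symm hv

/-- The forward map: place `T` on the two `λ`-rows, fill `α`-row `i` with `i`s. -/
def fwdTab (l1 l2 L : ℕ) (a : ℕ → ℕ) (T : SemistandardYoungTableau (twoRow l1 l2)) :
    SkewTab (starLo l1 (L-1)) (starLen l1 l2 a (L-1)) where
  entry i j :=
    if starLo l1 (L-1) i ≤ j ∧ j < starLo l1 (L-1) i + starLen l1 l2 a (L-1) i then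
      (if i < L-1 then i else T (i - (L-1)) j) else 0
  rowWeak := by
    intro i j1 j2 h1 h12 h2
    beta_reduce
    have c1 : starLo l1 (L-1) i ≤ j1 ∧ j1 < starLo l1 (L-1) i + starLen l1 l2 a (L-1) i :=
      ⟨h1, by omega⟩
    have c2 : starLo l1 (L-1) i ≤ j2 ∧ j2 < starLo l1 (L-1) i + starLen l1 l2 a (L-1) i :=
      ⟨by omega, h2⟩
    rw [if_pos c1, if_pos c2]
    by_cases hi : i < L - 1
    · simp only [if_pos hi]
      exact le_refl _
    · simp only [if_neg hi]
      rcases eq_or_lt_of_le h12 with rfl | hlt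
      · exact le_refl _
      · have hlo : starLo l1 (L-1) i = 0 := if_neg hi
        have hmem : (i - (L-1), j2) ∈ twoRow l1 l2 := by
          rw [mem_twoRow]
          rw [hlo] at h2
          by_cases hm : i = L - 1
          · left
            constructor
            · omega
            · have : starLen l1 l2 a (L-1) i = l1 := by
                rw [starLen, if_neg hi, if_pos hm]
              omega
          · by_cases hm1 : i = L - 1 + 1
            · right
              constructor
              · omega
              · have : starLen l1 l2 a (L-1) i = l2 := by
                  rw [starLen, if_neg hi, if_neg hm, if_pos hm1]
                omega
            · exfalso
              have : starLen l1 l2 a (L-1) i = 0 := by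
                rw [starLen, if_neg hi, if_neg hm, if_neg hm1]
              omega
        exact T.row_weak hlt hmem
  colStrict := by
    intro i j h1 h2 h3 h4
    beta_reduce
    have c1 : starLo l1 (L-1) i ≤ j ∧ j < starLo l1 (L-1) i + starLen l1 l2 a (L-1) i :=
      ⟨h1, h2⟩
    have c2 : starLo l1 (L-1) (i+1) ≤ j ∧
        j < starLo l1 (L-1) (i+1) + starLen l1 l2 a (L-1) (i+1) := ⟨h3, h4⟩
    rw [if_pos c1, if_pos c2]
    by_cases hi1 : i + 1 < L - 1
    · simp only [if_pos (show i < L - 1 by omega), if_pos hi1]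
      omega
    · by_cases hi : i < L - 1
      · -- i + 1 = L - 1 : contradiction, rows don't overlap
        exfalso
        have hm : i + 1 = L - 1 := by omega
        have hlo1 : starLo l1 (L-1) i = l1 := if_pos hi
        have hlo2 : starLo l1 (L-1) (i+1) = 0 := if_neg hi1
        have hlen2 : starLen l1 l2 a (L-1) (i+1) = l1 := by
          rw [starLen, if_neg hi1, if_pos hm]
        omega
      · by_cases hm : i = L - 1
        · simp only [if_neg hi, if_neg (show ¬ i + 1 < L - 1 by omega)]
          have e1 : i - (L-1) = 0 := by omega
          have e2 : i + 1 - (L-1) = 1 := by omega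
          rw [e1, e2]
          refine T.col_strict Nat.zero_lt_one ?_
          rw [mem_twoRow]
          right
          refine ⟨rfl, ?_⟩
          have hlo2 : starLo l1 (L-1) (i+1) = 0 := if_neg (by omega)
          have hlen2 : starLen l1 l2 a (L-1) (i+1) = l2 := by
            rw [starLen, if_neg (by omega), if_neg (by omega), if_pos (by omega)]
          omega
        · exfalso
          have hlen2 : starLen l1 l2 a (L-1) (i+1) = 0 := by
            rw [starLen, if_neg (by omega), if_neg (by omega), if_neg (by omega)]
          have hlo2 : starLo l1 (L-1) (i+1) = 0 := if_neg (by omega)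
          omega
  zeros := by
    intro i j h
    beta_reduce
    rw [if_neg h]

-- generic list lemmas
lemma take_flatMap_range (f : ℕ → List ℕ) (r n : ℕ) :
    ∃ i ≤ r, ∃ q, q <+: f i ∧
      ((List.range r).flatMap f).take n = ((List.range i).flatMap f) ++ q := by
  induction r generalizing n with
  | zero => exact ⟨0, le_refl _, [], List.nil_prefix, by simp⟩
  | succ r ih =>
    rw [List.range_succ, List.flatMap_append]
    by_cases h : n ≤ ((List.range r).flatMap f).length
    · obtain ⟨i, hi, q, hq, he⟩ := ih n
      refine ⟨i, by omega, q, hq, ?_⟩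
      rw [List.take_append, Nat.sub_eq_zero_of_le h, List.take_zero,
        List.append_nil, he]
    · refine ⟨r, by omega, (f r).take (n - ((List.range r).flatMap f).length),
        List.take_prefix _ _, ?_⟩
      rw [List.take_append, List.take_of_length_le (by omega)]
      simp

lemma count_flatMap_range (f : ℕ → List ℕ) (v r : ℕ) :
    (((List.range r).flatMap f).count v) = ∑ k ∈ Finset.range r, (f k).count v := by
  induction r with
  | zero => simp
  | succ r ih => rw [List.range_succ, List.flatMap_append, List.count_append, ih,
      Finset.sum_range_succ]; simp

lemma sum_ite_eq_range (a : ℕ → ℕ) (v N : ℕ) :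
    (∑ k ∈ Finset.range N, if v = k then a k else 0) = if v < N then a v else 0 := by
  rw [Finset.sum_ite_eq]
  simp

section Fwd

variable (l1 l2 L : ℕ) (mu a : ℕ → ℕ) (T : SemistandardYoungTableau (twoRow l1 l2))

lemma fwdTab_entry_in {i j : ℕ} (h1 : starLo l1 (L-1) i ≤ j)
    (h2 : j < starLo l1 (L-1) i + starLen l1 l2 a (L-1) i) :
    (fwdTab l1 l2 L a T).entry i j = if i < L-1 then i else T (i - (L-1)) j := by
  have hd : (fwdTab l1 l2 L a T).entry i j =
      if starLo l1 (L-1) i ≤ j ∧ j < starLo l1 (L-1) i + starLen l1 l2 a (L-1) i then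
        (if i < L-1 then i else T (i - (L-1)) j) else 0 := rfl
  rw [hd, if_pos ⟨h1, h2⟩]

lemma count_rowWord_fwd_alpha {i : ℕ} (hi : i < L - 1) (v : ℕ) :
    (rowWord (starLo l1 (L-1)) (starLen l1 l2 a (L-1)) (fwdTab l1 l2 L a T) i).count v
      = if v = i then a i else 0 := by
  rw [count_rowWord, rowContent_const (c := i), starLen, if_pos hi]
  intro j hj1 hj2
  rw [fwdTab_entry_in l1 l2 L a T hj1 hj2, if_pos hi]

lemma count_rowWord_fwd_row0 (v : ℕ) :
    (rowWord (starLo l1 (L-1)) (starLen l1 l2 a (L-1)) (fwdTab l1 l2 L a T) (L-1)).count v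
      = ∑ j ∈ Finset.range l1, if T 0 j = v then 1 else 0 := by
  have hlo : starLo l1 (L-1) (L-1) = 0 := if_neg (by omega)
  have hlen : starLen l1 l2 a (L-1) (L-1) = l1 := by
    rw [starLen, if_neg (by omega), if_pos rfl]
  rw [count_rowWord, rowContent, hlo, hlen, Finset.card_filter, zero_add,
    ← Finset.range_eq_Ico]
  refine Finset.sum_congr rfl fun j hj => ?_
  rw [Finset.mem_range] at hj
  rw [fwdTab_entry_in l1 l2 L a T (by omega) (by omega),
    if_neg (show ¬ (L-1 < L-1) by omega), Nat.sub_self]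

lemma count_rowWord_fwd_row1 (v : ℕ) :
    (rowWord (starLo l1 (L-1)) (starLen l1 l2 a (L-1)) (fwdTab l1 l2 L a T) (L-1+1)).count v
      = ∑ j ∈ Finset.range l2, if T 1 j = v then 1 else 0 := by
  have hlo : starLo l1 (L-1) (L-1+1) = 0 := if_neg (by omega)
  have hlen : starLen l1 l2 a (L-1) (L-1+1) = l2 := by
    rw [starLen, if_neg (by omega), if_neg (by omega), if_pos rfl]
  rw [count_rowWord, rowContent, hlo, hlen, Finset.card_filter, zero_add,
    ← Finset.range_eq_Ico]
  refine Finset.sum_congr rfl fun j hj => ?_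
  rw [Finset.mem_range] at hj
  have he : starLo l1 (L-1) (L-1+1) + starLen l1 l2 a (L-1) (L-1+1) = l2 := by
    rw [hlo, hlen]; omega
  rw [fwdTab_entry_in l1 l2 L a T (by omega) (by omega),
    if_neg (show ¬ (L-1+1 < L-1) by omega), show L-1+1-(L-1) = 1 by omega]

lemma count_rowWord_fwd_big {i : ℕ} (hi : L-1+1 < i) (v : ℕ) :
    (rowWord (starLo l1 (L-1)) (starLen l1 l2 a (L-1)) (fwdTab l1 l2 L a T) i).count v
      = 0 := by
  have hlen : starLen l1 l2 a (L-1) i = 0 := by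
    rw [starLen, if_neg (by omega), if_neg (by omega), if_neg (by omega)]
  rw [rowWord, hlen]
  simp

end Fwd

section Fwd2

variable (l1 l2 L : ℕ) (mu a : ℕ → ℕ) (T : SemistandardYoungTableau (twoRow l1 l2))

lemma fwd_lattice (hl : l2 ≤ l1) (hL : 1 ≤ L)
    (hstep : ∀ v, a v = mu (v+1) + a (v+1))
    (hmu0 : ∀ v, L ≤ v → mu v = 0)
    (hc : ∀ v, content T v = mu v) :
    IsLattice (readWord (starLo l1 (L-1)) (starLen l1 l2 a (L-1)) (L+1)
      (fwdTab l1 l2 L a T)) := by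
  intro n v
  rw [readWord_eq]
  set f := rowWord (starLo l1 (L-1)) (starLen l1 l2 a (L-1)) (fwdTab l1 l2 L a T) with hf
  obtain ⟨i, hi, q, hq, he⟩ := take_flatMap_range f (L+1) n
  rw [he, List.count_append, List.count_append, count_flatMap_range, count_flatMap_range]
  have hqv : ∀ u, q.count u ≤ (f i).count u := fun u => hq.sublist.count_le u
  have hsGen : ∀ N, N ≤ L-1 → ∀ u,
      (∑ k ∈ Finset.range N, (f k).count u) = if u < N then a u else 0 := by
    intro N hN u
    rw [Finset.sum_congr rfl (fun k hk =>
      count_rowWord_fwd_alpha l1 l2 L a T (by have := Finset.mem_range.mp hk; omega) u),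
      sum_ite_eq_range]
  have hr01 : ∀ u, (∑ j ∈ Finset.range l1, if T 0 j = u then 1 else 0)
      + (∑ j ∈ Finset.range l2, if T 1 j = u then 1 else 0) = mu u := by
    intro u
    rw [← hc u, content_twoRow, max_eq_left hl]
  have hstep' := hstep v
  rcases Nat.lt_or_ge i (L-1) with hcase | hcase
  · -- i < L-1 : prefix inside the alpha rows
    rw [hsGen i (by omega), hsGen i (by omega)]
    have hqb := le_trans (hqv (v+1)) (le_of_eq (count_rowWord_fwd_alpha l1 l2 L a T hcase (v+1)))
    rcases lt_trichotomy (v+1) i with h | h | h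
    · rw [if_neg (show ¬ (v+1 = i) by omega)] at hqb
      rw [if_pos h, if_pos (show v < i by omega)]
      omega
    · rw [if_pos h] at hqb
      rw [← h] at hqb
      rw [if_neg (show ¬ (v+1 < i) by omega), if_pos (show v < i by omega)]
      omega
    · rw [if_neg (show ¬ (v+1 = i) by omega)] at hqb
      rw [if_neg (show ¬ (v+1 < i) by omega)]
      omega
  · -- i ≥ L-1
    have hdec : ∀ u, (∑ k ∈ Finset.range i, (f k).count u) =
        (if u < L-1 then a u else 0) +
        (if L-1 < i then (∑ j ∈ Finset.range l1, if T 0 j = u then 1 else 0) else 0) +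
        (if L-1+1 < i then (∑ j ∈ Finset.range l2, if T 1 j = u then 1 else 0) else 0) := by
      intro u
      rcases Nat.lt_trichotomy i (L-1+1) with hcc | hcc | hcc
      · have hieq : i = L - 1 := by omega
        rw [hieq, hsGen (L-1) (le_refl _) u,
          if_neg (show ¬ (L-1 < L-1) by omega),
          if_neg (show ¬ (L-1+1 < L-1) by omega)]
        omega
      · rw [hcc, Finset.sum_range_succ, hsGen (L-1) (le_refl _) u,
          if_pos (show L-1 < L-1+1 by omega),
          if_neg (show ¬ (L-1+1 < L-1+1) by omega)]
        simp only [hf]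
        rw [count_rowWord_fwd_row0 l1 l2 L a T u]
        omega
      · have hieq : i = L - 1 + 1 + 1 := by omega
        rw [hieq, Finset.sum_range_succ, Finset.sum_range_succ, hsGen (L-1) (le_refl _) u,
          if_pos (show L-1 < L-1+1+1 by omega),
          if_pos (show L-1+1 < L-1+1+1 by omega)]
        simp only [hf]
        rw [count_rowWord_fwd_row0 l1 l2 L a T u, count_rowWord_fwd_row1 l1 l2 L a T u]
    have hmuv1 : q.count (v+1) + (if v+1 < L-1 then a (v+1) else 0) +
        (if L-1 < i then (∑ j ∈ Finset.range l1, if T 0 j = v+1 then 1 else 0) else 0) +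
        (if L-1+1 < i then (∑ j ∈ Finset.range l2, if T 1 j = v+1 then 1 else 0) else 0)
        ≤ (if v+1 < L-1 then a (v+1) else 0) + mu (v+1) := by
      have h01 := hr01 (v+1)
      rcases Nat.lt_trichotomy i (L-1+1) with hcc | hcc | hcc
      · have hieq : i = L - 1 := by omega
        have hqb : q.count (v+1) ≤ ∑ j ∈ Finset.range l1, if T 0 j = v+1 then 1 else 0 := by
          have h := hqv (v+1)
          rw [hieq, hf, count_rowWord_fwd_row0 l1 l2 L a T (v+1)] at h
          exact h
        have e3 : (if L-1 < i then (∑ j ∈ Finset.range l1, if T 0 j = v+1 then 1 else 0) else 0)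
          = 0 := if_neg (by omega)
        have e4 : (if L-1+1 < i then (∑ j ∈ Finset.range l2, if T 1 j = v+1 then 1 else 0) else 0)
          = 0 := if_neg (by omega)
        omega
      · have hqb : q.count (v+1) ≤ ∑ j ∈ Finset.range l2, if T 1 j = v+1 then 1 else 0 := by
          have h := hqv (v+1)
          rw [hcc, hf, count_rowWord_fwd_row1 l1 l2 L a T (v+1)] at h
          exact h
        have e3 : (if L-1 < i then (∑ j ∈ Finset.range l1, if T 0 j = v+1 then 1 else 0) else 0)
          = ∑ j ∈ Finset.range l1, if T 0 j = v+1 then 1 else 0 := if_pos (by omega)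
        have e4 : (if L-1+1 < i then (∑ j ∈ Finset.range l2, if T 1 j = v+1 then 1 else 0) else 0)
          = 0 := if_neg (by omega)
        omega
      · have hqb : q.count (v+1) ≤ 0 := by
          have h := hqv (v+1)
          rw [hf, count_rowWord_fwd_big l1 l2 L a T hcc (v+1)] at h
          exact h
        have e3 : (if L-1 < i then (∑ j ∈ Finset.range l1, if T 0 j = v+1 then 1 else 0) else 0)
          = ∑ j ∈ Finset.range l1, if T 0 j = v+1 then 1 else 0 := if_pos (by omega)
        have e4 : (if L-1+1 < i then (∑ j ∈ Finset.range l2, if T 1 j = v+1 then 1 else 0) else 0)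
          = ∑ j ∈ Finset.range l2, if T 1 j = v+1 then 1 else 0 := if_pos (by omega)
        omega
    rw [hdec (v+1), hdec v]
    rcases lt_trichotomy (v+1) (L-1) with h | h | h
    · have e1 : (if v+1 < L-1 then a (v+1) else 0) = a (v+1) := if_pos h
      have e2 : (if v < L-1 then a v else 0) = a v := if_pos (by omega)
      omega
    · have e1 : (if v+1 < L-1 then a (v+1) else 0) = 0 := if_neg (by omega)
      have e2 : (if v < L-1 then a v else 0) = a v := if_pos (by omega)
      omega
    · have e1 : (if v+1 < L-1 then a (v+1) else 0) = 0 := if_neg (by omega)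
      have hz : mu (v+1) = 0 := hmu0 (v+1) (by omega)
      omega

lemma fwd_skewContent (hl : l2 ≤ l1) (hL : 1 ≤ L)
    (hzero : ∀ v, L - 1 ≤ v → a v = 0)
    (hnu : ∀ v, (∑ w ∈ Finset.Ico v L, mu w) = mu v + a v)
    (hc : ∀ v, content T v = mu v) (v : ℕ) :
    skewContent (starLo l1 (L-1)) (starLen l1 l2 a (L-1)) (L+1) (fwdTab l1 l2 L a T) v
      = ∑ w ∈ Finset.Ico v L, mu w := by
  have hr01 : (∑ j ∈ Finset.range l1, if T 0 j = v then 1 else 0)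
      + (∑ j ∈ Finset.range l2, if T 1 j = v then 1 else 0) = mu v := by
    rw [← hc v, content_twoRow, max_eq_left hl]
  have hL1 : L + 1 = (L-1) + 1 + 1 := by omega
  rw [skewContent, hL1, Finset.sum_range_succ, Finset.sum_range_succ]
  have hrc : ∀ k v, rowContent (starLo l1 (L-1)) (starLen l1 l2 a (L-1))
      (fwdTab l1 l2 L a T) k v
      = (rowWord (starLo l1 (L-1)) (starLen l1 l2 a (L-1)) (fwdTab l1 l2 L a T) k).count v :=
    fun k v => (count_rowWord _ _ _ k v).symm
  rw [Finset.sum_congr rfl (fun k _ => hrc k v), hrc _ v, hrc _ v,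
    count_rowWord_fwd_row0 l1 l2 L a T v, count_rowWord_fwd_row1 l1 l2 L a T v]
  have hsA : (∑ k ∈ Finset.range (L-1),
      (rowWord (starLo l1 (L-1)) (starLen l1 l2 a (L-1)) (fwdTab l1 l2 L a T) k).count v)
      = if v < L-1 then a v else 0 := by
    rw [Finset.sum_congr rfl (fun k hk =>
      count_rowWord_fwd_alpha l1 l2 L a T (Finset.mem_range.mp hk) v),
      sum_ite_eq_range]
  rw [hsA, hnu v]
  rcases Nat.lt_or_ge v (L-1) with h | h
  · rw [if_pos h]
    omega
  · rw [if_neg (show ¬ v < L-1 by omega)]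
    have := hzero v h
    omega

end Fwd2

section Bwd

variable (l1 l2 L : ℕ) (mu a : ℕ → ℕ)

lemma alpha_rows (hL : 1 ≤ L) (hmono : ∀ x y, x ≤ y → a y ≤ a x)
    (S : SkewTab (starLo l1 (L-1)) (starLen l1 l2 a (L-1)))
    (hlat : IsLattice (readWord (starLo l1 (L-1)) (starLen l1 l2 a (L-1)) (L+1) S)) :
    ∀ i, i < L - 1 → ∀ j, l1 ≤ j → j < l1 + a i → S.entry i j = i := by
  intro i
  induction i using Nat.strong_induction_on with
  | _ i IH =>
    intro hi j hj1 hj2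
    have hlo : ∀ k, k < L-1 → starLo l1 (L-1) k = l1 := fun k hk => if_pos hk
    have hlen : ∀ k, k < L-1 → starLen l1 l2 a (L-1) k = a k := fun k hk => by
      rw [starLen, if_pos hk]
    -- lower bound along the column
    have lb : ∀ k, k ≤ i → ∀ j', l1 ≤ j' → j' < l1 + a i → (k:ℕ) ≤ S.entry k j' := by
      intro k
      induction k with
      | zero => intro _ _ _ _; exact Nat.zero_le _
      | succ k ihk =>
        intro hk j' h1 h2
        have hk' := ihk (by omega) j' h1 h2
        have hma := hmono k i (by omega)
        have hma' := hmono (k+1) i (by omega)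
        have hcs := S.colStrict k j' (by rw [hlo k (by omega)]; exact h1)
          (by rw [hlo k (by omega), hlen k (by omega)]; omega)
          (by rw [hlo (k+1) (by omega)]; exact h1)
          (by rw [hlo (k+1) (by omega), hlen (k+1) (by omega)]; omega)
        omega
    by_cases ha : a i = 0
    · omega
    obtain ⟨t, ht⟩ : ∃ t, a i = t + 1 := ⟨a i - 1, by omega⟩
    set f := rowWord (starLo l1 (L-1)) (starLen l1 l2 a (L-1)) S with hfd
    have hfk : ∀ k, k < i → ∀ u, (f k).count u = if u = k then a k else 0 := by
      intro k hk u
      rw [hfd, count_rowWord, rowContent_const (c := k), hlen k (by omega)]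
      intro j' hj1' hj2'
      rw [hlo k (by omega)] at hj1'
      rw [hlo k (by omega), hlen k (by omega)] at hj2'
      exact IH k hk (by omega) j' hj1' hj2'
    have hcount : ∀ u, (((List.range i).flatMap f).count u) = if u < i then a u else 0 := by
      intro u
      rw [count_flatMap_range,
        Finset.sum_congr rfl (fun k hk => hfk k (Finset.mem_range.mp hk) u),
        sum_ite_eq_range]
    obtain ⟨R, hword⟩ : ∃ R, (List.range (L+1)).flatMap f
        = ((List.range i).flatMap f) ++ (f i ++ R) := by
      have h1 : L + 1 = i + (1 + (L - i)) := by omega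
      have hA : ((List.range 1).map (fun x => i + x)).flatMap f = f i := by
        show f (i + 0) ++ [].flatMap f = f i
        simp
      refine ⟨(((List.range (L - i)).map (fun x => 1 + x)).map (fun x => i + x)).flatMap f, ?_⟩
      rw [h1, List.range_add, List.flatMap_append, List.range_add, List.map_append,
        List.flatMap_append, hA]
    have hlenfi : (f i).length = t + 1 := by
      rw [hfd, length_rowWord, hlen i hi, ht]
    have hfi1 : (f i).take 1 = [S.entry i (l1 + t)] := by
      have hrev : (List.range (t+1)).reverse = t :: (List.range t).reverse := by
        rw [List.range_succ]; simp
      rw [hfd]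
      show ((List.range (starLen l1 l2 a (L-1) i)).reverse.map
        (fun x => S.entry i (starLo l1 (L-1) i + x))).take 1 = _
      rw [hlen i hi, ht, hlo i hi, hrev, List.map_cons]
      rfl
    set n := ((List.range i).flatMap f).length + 1 with hn
    have htake : ((List.range (L+1)).flatMap f).take n
        = ((List.range i).flatMap f) ++ [S.entry i (l1 + t)] := by
      rw [hword, List.take_append, List.take_of_length_le (by omega)]
      have h2 : n - ((List.range i).flatMap f).length = 1 := by omega
      rw [h2, List.take_append, hfi1]
      have h3 : 1 - (f i).length = 0 := by omega
      rw [h3, List.take_zero, List.append_nil]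
    have hub : S.entry i (l1 + t) ≤ i := by
      by_contra hgt
      push_neg at hgt
      have hlt := hlat n (S.entry i (l1 + t) - 1)
      rw [readWord_eq, htake, List.count_append, List.count_append, hcount, hcount] at hlt
      have he1 : S.entry i (l1 + t) - 1 + 1 = S.entry i (l1 + t) := by omega
      rw [he1] at hlt
      have c1 : List.count (S.entry i (l1 + t)) [S.entry i (l1 + t)] = 1 := by simp
      have c2 : List.count (S.entry i (l1 + t) - 1) [S.entry i (l1 + t)] = 0 := by
        simp only [List.count_singleton', beq_iff_eq]
        rw [if_neg (by omega)]
      have e1 : (if S.entry i (l1 + t) < i then a (S.entry i (l1 + t)) else 0) = 0 :=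
        if_neg (by omega)
      have e2 : (if S.entry i (l1 + t) - 1 < i then a (S.entry i (l1 + t) - 1) else 0) = 0 :=
        if_neg (by omega)
      omega
    have hle : S.entry i j ≤ S.entry i (l1 + t) := by
      refine S.rowWeak i j (l1 + t) (by rw [hlo i hi]; exact hj1) (by omega) ?_
      rw [hlo i hi, hlen i hi]
      omega
    have hlb := lb i (le_refl _) j hj1 hj2
    omega

end Bwd

section Bwd2

variable (l1 l2 L : ℕ) (mu a : ℕ → ℕ)

/-- The backward map: restrict `S` to its two `λ`-rows. -/
def bwdT (l1 l2 L : ℕ) (a : ℕ → ℕ) (hl : l2 ≤ l1) (hL : 1 ≤ L)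
    (S : SkewTab (starLo l1 (L-1)) (starLen l1 l2 a (L-1))) :
    SemistandardYoungTableau (twoRow l1 l2) where
  entry i j := S.entry (L - 1 + i) j
  row_weak' := by
    intro i j1 j2 h12 hmem
    rw [mem_twoRow] at hmem
    have hm := max_eq_left hl
    rcases hmem with ⟨rfl, hj⟩ | ⟨rfl, hj⟩
    · refine S.rowWeak (L-1+0) j1 j2 ?_ (le_of_lt h12) ?_
      · rw [show starLo l1 (L-1) (L-1+0) = 0 from if_neg (by omega)]
        exact Nat.zero_le _
      · rw [show starLo l1 (L-1) (L-1+0) = 0 from if_neg (by omega),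
          show starLen l1 l2 a (L-1) (L-1+0) = l1 by
            rw [starLen, if_neg (by omega), if_pos (by omega)]]
        omega
    · refine S.rowWeak (L-1+1) j1 j2 ?_ (le_of_lt h12) ?_
      · rw [show starLo l1 (L-1) (L-1+1) = 0 from if_neg (by omega)]
        exact Nat.zero_le _
      · rw [show starLo l1 (L-1) (L-1+1) = 0 from if_neg (by omega),
          show starLen l1 l2 a (L-1) (L-1+1) = l2 by
            rw [starLen, if_neg (by omega), if_neg (by omega), if_pos (by omega)]]
        omega
  col_strict' := by
    intro i1 i2 j hlt hmem
    rw [mem_twoRow] at hmem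
    rcases hmem with ⟨h0, hj⟩ | ⟨h1, hj⟩
    · omega
    · have hi1 : i1 = 0 := by omega
      subst h1; subst hi1
      have hcs := S.colStrict (L-1) j
        (by rw [show starLo l1 (L-1) (L-1) = 0 from if_neg (by omega)]; exact Nat.zero_le _)
        (by rw [show starLo l1 (L-1) (L-1) = 0 from if_neg (by omega),
              show starLen l1 l2 a (L-1) (L-1) = l1 by
                rw [starLen, if_neg (by omega), if_pos (by omega)]]
            omega)
        (by rw [show starLo l1 (L-1) (L-1+1) = 0 from if_neg (by omega)]; exact Nat.zero_le _)
        (by rw [show starLo l1 (L-1) (L-1+1) = 0 from if_neg (by omega),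
              show starLen l1 l2 a (L-1) (L-1+1) = l2 by
                rw [starLen, if_neg (by omega), if_neg (by omega), if_pos (by omega)]]
            omega)
      exact hcs
  zeros' := by
    intro i j hmem
    rw [mem_twoRow] at hmem
    push_neg at hmem
    have hm := max_eq_left hl
    match i with
    | 0 =>
      refine S.zeros (L-1+0) j ?_
      rw [show starLo l1 (L-1) (L-1+0) = 0 from if_neg (by omega),
        show starLen l1 l2 a (L-1) (L-1+0) = l1 by
          rw [starLen, if_neg (by omega), if_pos (by omega)]]
      have := hmem.1 rfl
      omega
    | 1 =>
      refine S.zeros (L-1+1) j ?_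
      rw [show starLo l1 (L-1) (L-1+1) = 0 from if_neg (by omega),
        show starLen l1 l2 a (L-1) (L-1+1) = l2 by
          rw [starLen, if_neg (by omega), if_neg (by omega), if_pos (by omega)]]
      have := hmem.2 rfl
      omega
    | (n+2) =>
      refine S.zeros (L-1+(n+2)) j ?_
      rw [show starLo l1 (L-1) (L-1+(n+2)) = 0 from if_neg (by omega),
        show starLen l1 l2 a (L-1) (L-1+(n+2)) = 0 by
          rw [starLen, if_neg (by omega), if_neg (by omega), if_neg (by omega)]]
      omega

lemma bwd_content (hl : l2 ≤ l1) (hL : 1 ≤ L)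
    (hmono : ∀ x y, x ≤ y → a y ≤ a x)
    (hzero : ∀ v, L - 1 ≤ v → a v = 0)
    (hnu : ∀ v, (∑ w ∈ Finset.Ico v L, mu w) = mu v + a v)
    (S : SkewTab (starLo l1 (L-1)) (starLen l1 l2 a (L-1)))
    (hlat : IsLattice (readWord (starLo l1 (L-1)) (starLen l1 l2 a (L-1)) (L+1) S))
    (hcont : ∀ v, skewContent (starLo l1 (L-1)) (starLen l1 l2 a (L-1)) (L+1) S v
      = ∑ w ∈ Finset.Ico v L, mu w) (v : ℕ) :
    content (bwdT l1 l2 L a hl hL S) v = mu v := by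
  have halpha := alpha_rows l1 l2 L a hL hmono S hlat
  have h1 := hcont v
  rw [skewContent, show L+1 = (L-1)+1+1 by omega, Finset.sum_range_succ,
    Finset.sum_range_succ, hnu v] at h1
  have hterm : ∀ k, k < L-1 →
      rowContent (starLo l1 (L-1)) (starLen l1 l2 a (L-1)) S k v
        = if v = k then a k else 0 := by
    intro k hk
    have hcst : ∀ j, starLo l1 (L-1) k ≤ j →
        j < starLo l1 (L-1) k + starLen l1 l2 a (L-1) k → S.entry k j = k := by
      intro j hj1 hj2
      rw [show starLo l1 (L-1) k = l1 from if_pos hk] at hj1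
      rw [show starLo l1 (L-1) k = l1 from if_pos hk,
        show starLen l1 l2 a (L-1) k = a k by rw [starLen, if_pos hk]] at hj2
      exact halpha k hk j hj1 hj2
    rw [rowContent_const hcst v, show starLen l1 l2 a (L-1) k = a k by
      rw [starLen, if_pos hk]]
  rw [Finset.sum_congr rfl (fun k hk => hterm k (Finset.mem_range.mp hk)),
    sum_ite_eq_range] at h1
  have hr0 : rowContent (starLo l1 (L-1)) (starLen l1 l2 a (L-1)) S (L-1) v
      = ∑ j ∈ Finset.range l1, if S.entry (L-1) j = v then 1 else 0 := by
    rw [rowContent, show starLo l1 (L-1) (L-1) = 0 from if_neg (by omega),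
      show starLen l1 l2 a (L-1) (L-1) = l1 by
        rw [starLen, if_neg (by omega), if_pos (by omega)],
      Finset.card_filter, zero_add, ← Finset.range_eq_Ico]
  have hr1 : rowContent (starLo l1 (L-1)) (starLen l1 l2 a (L-1)) S (L-1+1) v
      = ∑ j ∈ Finset.range l2, if S.entry (L-1+1) j = v then 1 else 0 := by
    rw [rowContent, show starLo l1 (L-1) (L-1+1) = 0 from if_neg (by omega),
      show starLen l1 l2 a (L-1) (L-1+1) = l2 by
        rw [starLen, if_neg (by omega), if_neg (by omega), if_pos (by omega)],
      Finset.card_filter, zero_add, ← Finset.range_eq_Ico]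
  rw [hr0, hr1] at h1
  rw [content_twoRow, max_eq_left hl]
  have hb0 : ∀ j, (bwdT l1 l2 L a hl hL S) 0 j = S.entry (L-1) j := fun j => rfl
  have hb1 : ∀ j, (bwdT l1 l2 L a hl hL S) 1 j = S.entry (L-1+1) j := fun j => rfl
  simp only [hb0, hb1]
  rcases Nat.lt_or_ge v (L-1) with h | h
  · rw [if_pos h] at h1
    omega
  · rw [if_neg (show ¬ v < L-1 by omega)] at h1
    have := hzero v h
    omega

end Bwd2

/-- The map `T ↦ S(T)` (place `T` on the `λ`-part, fill row `i` of the
`α`-part with `i`'s) is a bijection between SSYT of shape `λ = (l1, l2)` and content `μ`,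
and LR skew tableaux of shape `λ*α` and content `ν`. -/
theorem stmt9 (l1 l2 L : ℕ) (hl : l2 ≤ l1) (hL : 1 ≤ L) (mu : ℕ → ℕ)
    (hmu : ∀ i, L ≤ i → mu i = 0) (hsum : l1 + l2 = ∑ j ∈ Finset.range L, mu j) :
    ∃ e : {T : SemistandardYoungTableau (twoRow l1 l2) // ∀ v, content T v = mu v} ≃
          {S : SkewTab (starLo l1 (L - 1)) (starLen l1 l2 (fun i => ∑ w ∈ Finset.Ico (i + 1) L, mu w) (L - 1)) //
            IsLattice (readWord (starLo l1 (L - 1)) (starLen l1 l2 (fun i => ∑ w ∈ Finset.Ico (i + 1) L, mu w) (L - 1)) (L + 1) S) ∧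
            ∀ v, skewContent (starLo l1 (L - 1)) (starLen l1 l2 (fun i => ∑ w ∈ Finset.Ico (i + 1) L, mu w) (L - 1)) (L + 1) S v =
              ∑ w ∈ Finset.Ico v L, mu w},
      ∀ T i j, starLo l1 (L - 1) i ≤ j →
        j < starLo l1 (L - 1) i + starLen l1 l2 (fun i => ∑ w ∈ Finset.Ico (i + 1) L, mu w) (L - 1) i →
        (e T : SkewTab (starLo l1 (L - 1)) (starLen l1 l2 (fun i => ∑ w ∈ Finset.Ico (i + 1) L, mu w) (L - 1))).entry i j =
          if i < L - 1 then i
          else (T : SemistandardYoungTableau (twoRow l1 l2)) (i - (L - 1)) j := by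
  set A : ℕ → ℕ := fun i => ∑ w ∈ Finset.Ico (i + 1) L, mu w with hA
  have hstep : ∀ v, A v = mu (v+1) + A (v+1) := by
    intro v
    show (∑ w ∈ Finset.Ico (v + 1) L, mu w) = mu (v+1) + ∑ w ∈ Finset.Ico (v+1+1) L, mu w
    rcases Nat.lt_or_ge (v+1) L with h | h
    · exact Finset.sum_eq_sum_Ico_succ_bot h mu
    · rw [Finset.Ico_eq_empty (by omega), Finset.Ico_eq_empty (by omega), hmu (v+1) (by omega)]
      simp
  have hzero : ∀ v, L - 1 ≤ v → A v = 0 := by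
    intro v hv
    show (∑ w ∈ Finset.Ico (v + 1) L, mu w) = 0
    rw [Finset.Ico_eq_empty (by omega), Finset.sum_empty]
  have hmono : ∀ x y, x ≤ y → A y ≤ A x := by
    intro x y hxy
    exact Finset.sum_le_sum_of_subset (Finset.Ico_subset_Ico (by omega) (le_refl L))
  have hnu : ∀ v, (∑ w ∈ Finset.Ico v L, mu w) = mu v + A v := by
    intro v
    show (∑ w ∈ Finset.Ico v L, mu w) = mu v + ∑ w ∈ Finset.Ico (v+1) L, mu w
    rcases Nat.lt_or_ge v L with h | h
    · exact Finset.sum_eq_sum_Ico_succ_bot h mu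
    · rw [Finset.Ico_eq_empty (by omega), Finset.Ico_eq_empty (by omega), hmu v (by omega)]
      simp
  refine ⟨{
    toFun := fun T => ⟨fwdTab l1 l2 L A T.1,
      fwd_lattice l1 l2 L mu A T.1 hl hL hstep hmu T.2,
      fun v => fwd_skewContent l1 l2 L mu A T.1 hl hL hzero hnu T.2 v⟩,
    invFun := fun S => ⟨bwdT l1 l2 L A hl hL S.1,
      fun v => bwd_content l1 l2 L mu A hl hL hmono hzero hnu S.1 S.2.1 S.2.2 v⟩,
    left_inv := ?_, right_inv := ?_}, ?_⟩
  · -- left inverse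
    intro T
    apply Subtype.ext
    apply SemistandardYoungTableau.ext
    intro i j
    have hL1 : (bwdT l1 l2 L A hl hL (fwdTab l1 l2 L A T.1)) i j
        = (fwdTab l1 l2 L A T.1).entry (L-1+i) j := rfl
    show (bwdT l1 l2 L A hl hL (fwdTab l1 l2 L A T.1)) i j = T.1 i j
    rw [hL1]
    by_cases hc1 : starLo l1 (L-1) (L-1+i) ≤ j ∧
        j < starLo l1 (L-1) (L-1+i) + starLen l1 l2 A (L-1) (L-1+i)
    · rw [fwdTab_entry_in l1 l2 L A T.1 hc1.1 hc1.2,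
        if_neg (show ¬ (L-1+i < L-1) by omega), show L-1+i-(L-1) = i by omega]
    · rw [(fwdTab l1 l2 L A T.1).zeros _ _ hc1]
      refine Eq.symm (T.1.zeros ?_)
      rw [mem_twoRow]
      have hm := max_eq_left hl
      rintro (⟨rfl, hj⟩ | ⟨rfl, hj⟩)
      · have e1 : starLo l1 (L-1) (L-1+0) = 0 := if_neg (by omega)
        have e2 : starLen l1 l2 A (L-1) (L-1+0) = l1 := by
          rw [starLen, if_neg (by omega), if_pos (by omega)]
        exact hc1 ⟨by omega, by omega⟩
      · have e1 : starLo l1 (L-1) (L-1+1) = 0 := if_neg (by omega)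
        have e2 : starLen l1 l2 A (L-1) (L-1+1) = l2 := by
          rw [starLen, if_neg (by omega), if_neg (by omega), if_pos (by omega)]
        exact hc1 ⟨by omega, by omega⟩
  · -- right inverse
    intro S
    apply Subtype.ext
    apply SkewTab.ext'
    intro i j
    show (fwdTab l1 l2 L A (bwdT l1 l2 L A hl hL S.1)).entry i j = S.1.entry i j
    by_cases hc1 : starLo l1 (L-1) i ≤ j ∧
        j < starLo l1 (L-1) i + starLen l1 l2 A (L-1) i
    · rw [fwdTab_entry_in l1 l2 L A _ hc1.1 hc1.2]
      by_cases hi : i < L-1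
      · rw [if_pos hi]
        have halpha := alpha_rows l1 l2 L A hL hmono S.1 S.2.1
        have e1 : starLo l1 (L-1) i = l1 := if_pos hi
        have e2 : starLen l1 l2 A (L-1) i = A i := by rw [starLen, if_pos hi]
        have h1 := hc1.1
        have h2 := hc1.2
        rw [e1] at h1
        rw [e1, e2] at h2
        exact (halpha i hi j h1 h2).symm
      · rw [if_neg hi]
        have hb : (bwdT l1 l2 L A hl hL S.1) (i - (L-1)) j
            = S.1.entry (L-1 + (i - (L-1))) j := rfl
        rw [hb, show L-1 + (i - (L-1)) = i by omega]
    · rw [(fwdTab l1 l2 L A _).zeros _ _ hc1]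
      exact (S.1.zeros i j hc1).symm
  · -- the formula
    intro T i j h1 h2
    exact fwdTab_entry_in l1 l2 L A T.1 h1 h2
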